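/- Suppose 1 ≤ χ < B and χ < |𝒯|. Then δ^{𝒯∖A} ≤ ( I(A;𝒬) − (B − χ)·min(η·α₁, 1) − χ·min(η·α₂, 1) − (|𝒰| − B + χ)·min( max(Ω_𝒰, Ω_{𝒰𝒯}), η·α₁ ) + 𝒪 ) / ( |𝒯| − χ ). -/

import Mathlib

open Finset

lemma aux_stmt10 {ι : Type*} [DecidableEq ι]
    (T U A : Finset ι) (hTU : Disjoint T U) (hAsub : A ⊆ T ∪ U)
    (f g : ι → ℝ) (m1 m2 m3 : ℝ)
    (hS1 : ∀ i ∈ A ∩ T, m2 ≤ min (f i) (g i))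
    (hS2 : ∀ i ∈ A \ T, m1 ≤ min (f i) (g i))
    (hS3 : ∀ i ∈ U \ A, m3 ≤ min (f i) (g i))
    (I : ℝ) (hI : I = ∑ i ∈ T ∪ U, min (f i) (g i))
    (Osum : ℝ) (hOsum : Osum = ∑ i ∈ T \ A, if g i < f i then f i - g i else 0)
    (hχ : 1 ≤ (A ∩ T).card) (hχB : (A ∩ T).card < A.card) (hχT : (A ∩ T).card < T.card) :
    (((T \ A).card : ℝ))⁻¹ * ∑ i ∈ T \ A, f i ≤
      (I - ((A.card : ℝ) - ((A ∩ T).card : ℝ)) * m1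
        - ((A ∩ T).card : ℝ) * m2
        - ((U.card : ℝ) - (A.card : ℝ) + ((A ∩ T).card : ℝ)) * m3
        + Osum) / ((T.card : ℝ) - ((A ∩ T).card : ℝ)) := by
  have hUA : U ∩ A = A \ T := by
    ext i
    simp only [mem_inter, mem_sdiff]
    constructor
    · rintro ⟨hiU, hiA⟩
      exact ⟨hiA, fun hiT => (disjoint_left.mp hTU) hiT hiU⟩
    · rintro ⟨hiA, hiT⟩
      refine ⟨?_, hiA⟩
      rcases mem_union.mp (hAsub hiA) with h | h
      · exact absurd h hiT
      · exact h
  have e1 : (A ∩ T).card + (A \ T).card = A.card := card_inter_add_card_sdiff A T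
  have e2 : (U ∩ A).card + (U \ A).card = U.card := card_inter_add_card_sdiff U A
  have e3 : (T ∩ A).card + (T \ A).card = T.card := card_inter_add_card_sdiff T A
  rw [hUA] at e2
  rw [inter_comm] at e3
  have hc2 : ((A \ T).card : ℝ) = (A.card : ℝ) - ((A ∩ T).card : ℝ) := by
    have := e1; push_cast [← this]; ring
  have hc3 : ((U \ A).card : ℝ) = (U.card : ℝ) - (A.card : ℝ) + ((A ∩ T).card : ℝ) := by
    have h2 : ((A \ T).card : ℝ) + ((U \ A).card : ℝ) = (U.card : ℝ) := by exact_mod_cast e2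
    linarith [hc2]
  have hc4 : ((T \ A).card : ℝ) = (T.card : ℝ) - ((A ∩ T).card : ℝ) := by
    have h3 : ((A ∩ T).card : ℝ) + ((T \ A).card : ℝ) = (T.card : ℝ) := by exact_mod_cast e3
    linarith
  have hpos : (0 : ℝ) < ((T \ A).card : ℝ) := by
    have : 0 < (T \ A).card := by omega
    exact_mod_cast this
  have hB1 : ((A ∩ T).card : ℝ) * m2 ≤ ∑ i ∈ A ∩ T, min (f i) (g i) := by
    have := Finset.card_nsmul_le_sum (A ∩ T) (fun i => min (f i) (g i)) m2 hS1
    simpa [nsmul_eq_mul] using this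
  have hB2 : ((A \ T).card : ℝ) * m1 ≤ ∑ i ∈ A \ T, min (f i) (g i) := by
    have := Finset.card_nsmul_le_sum (A \ T) (fun i => min (f i) (g i)) m1 hS2
    simpa [nsmul_eq_mul] using this
  have hB3 : ((U \ A).card : ℝ) * m3 ≤ ∑ i ∈ U \ A, min (f i) (g i) := by
    have := Finset.card_nsmul_le_sum (U \ A) (fun i => min (f i) (g i)) m3 hS3
    simpa [nsmul_eq_mul] using this
  have hB4 : ∑ i ∈ T \ A, min (f i) (g i) = (∑ i ∈ T \ A, f i) - Osum := by
    rw [hOsum, ← Finset.sum_sub_distrib]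
    refine sum_congr rfl fun i _ => ?_
    rcases lt_or_ge (g i) (f i) with h | h
    · rw [if_pos h, min_eq_right h.le]; ring
    · rw [if_neg (not_lt.mpr h), min_eq_left h]; ring
  have hIdec : I = (∑ i ∈ T \ A, min (f i) (g i)) + (∑ i ∈ U \ A, min (f i) (g i))
      + (∑ i ∈ A ∩ T, min (f i) (g i)) + (∑ i ∈ A \ T, min (f i) (g i)) := by
    rw [hI, ← sum_sdiff hAsub, union_sdiff_distrib,
      sum_union (hTU.mono sdiff_subset sdiff_subset), ← sum_inter_add_sum_sdiff A T]
    ring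
  have key : ∑ i ∈ T \ A, f i ≤
      I - ((A.card : ℝ) - ((A ∩ T).card : ℝ)) * m1 - ((A ∩ T).card : ℝ) * m2
        - ((U.card : ℝ) - (A.card : ℝ) + ((A ∩ T).card : ℝ)) * m3 + Osum := by
    rw [← hc2, ← hc3]
    linarith [hB1, hB2, hB3, hB4, hIdec]
  rw [← hc4, inv_mul_eq_div]
  gcongr

theorem stmt_10
    {ι : Type*} [Fintype ι] [DecidableEq ι]
    (s : ι → ι → ℝ)
    (hs : ∀ i j, s i j ∈ Set.Icc (0:ℝ) 1)
    (hsymm : ∀ i j, s i j = s j i)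
    (hself : ∀ i, s i i = 1)
    (T U Q : Finset ι)
    (hTU : Disjoint T U) (hTQ : Disjoint T Q) (hUQ : Disjoint U Q)
    (hQ : Q.Nonempty)
    (hT : T.Nonempty) (hU : U.Nonempty)
    (A : Finset ι) (hA : A.Nonempty) (hAsub : A ⊆ T ∪ U)
    (η : ℝ) (hη : 0 < η)
    (α₁ β₁ α₂ β₂ : ℝ)
    (hα₁ : ∀ i ∈ U, α₁ ≤ Q.sup' hQ (fun j => s i j))
    (hβ₁ : ∀ i ∈ U, Q.sup' hQ (fun j => s i j) ≤ β₁)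
    (hα₂ : ∀ i ∈ T, α₂ ≤ Q.sup' hQ (fun j => s i j))
    (hβ₂ : ∀ i ∈ T, Q.sup' hQ (fun j => s i j) ≤ β₂)
    (I : ℝ)
    (hI : I = ∑ i ∈ T ∪ U, min (A.sup' hA (fun j => s i j)) (η * Q.sup' hQ (fun j => s i j)))
    (δ : ℝ)
    (hδ : δ = ((T \ A).card : ℝ)⁻¹ * ∑ i ∈ T \ A, A.sup' hA (fun j => s i j))
    (Osum : ℝ)
    (hOsum : Osum = ∑ i ∈ T \ A,
      (if η * Q.sup' hQ (fun j => s i j) < A.sup' hA (fun j => s i j) then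
        A.sup' hA (fun j => s i j) - η * Q.sup' hQ (fun j => s i j) else 0))
    (ΩU ΩUT : ℝ)
    (hΩU : ΩU = U.inf' hU (fun i => U.inf' hU (fun j => s i j)))
    (hΩUT : ΩUT = U.inf' hU (fun i => T.inf' hT (fun j => s i j)))
    (hχ : 1 ≤ (A ∩ T).card) (hχB : (A ∩ T).card < A.card) (hχT : (A ∩ T).card < T.card) :
    δ ≤ (I - ((A.card : ℝ) - ((A ∩ T).card : ℝ)) * min (η * α₁) 1
          - ((A ∩ T).card : ℝ) * min (η * α₂) 1
          - ((U.card : ℝ) - (A.card : ℝ) + ((A ∩ T).card : ℝ)) * min (max ΩU ΩUT) (η * α₁)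
          + Osum) /
      ((T.card : ℝ) - ((A ∩ T).card : ℝ)) := by
  rw [hδ]
  have hATne : (A ∩ T).Nonempty := card_pos.mp (by omega)
  have hAUne : (A \ T).Nonempty := by
    rw [← card_pos]
    have := card_inter_add_card_sdiff A T
    omega
  have hf1 : ∀ i ∈ A, (1:ℝ) ≤ A.sup' hA (fun j => s i j) := fun i hi => by
    have := le_sup' (fun j => s i j) hi
    simp only [hself i] at this; exact this
  have hgU : ∀ i ∈ U, η * α₁ ≤ η * Q.sup' hQ (fun j => s i j) := fun i hi =>
    mul_le_mul_of_nonneg_left (hα₁ i hi) hη.le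
  have hgT : ∀ i ∈ T, η * α₂ ≤ η * Q.sup' hQ (fun j => s i j) := fun i hi =>
    mul_le_mul_of_nonneg_left (hα₂ i hi) hη.le
  apply aux_stmt10 T U A hTU hAsub
    (fun i => A.sup' hA (fun j => s i j)) (fun i => η * Q.sup' hQ (fun j => s i j))
    (min (η * α₁) 1) (min (η * α₂) 1) (min (max ΩU ΩUT) (η * α₁))
    ?_ ?_ ?_ I hI Osum hOsum hχ hχB hχT
  · intro i hi
    obtain ⟨hiA, hiT⟩ := mem_inter.mp hi
    exact le_min (le_trans (min_le_right _ _) (hf1 i hiA))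
      (le_trans (min_le_left _ _) (hgT i hiT))
  · intro i hi
    obtain ⟨hiA, hiT⟩ := mem_sdiff.mp hi
    have hiU : i ∈ U := by
      rcases mem_union.mp (hAsub hiA) with h | h
      · exact absurd h hiT
      · exact h
    exact le_min (le_trans (min_le_right _ _) (hf1 i hiA))
      (le_trans (min_le_left _ _) (hgU i hiU))
  · intro i hi
    obtain ⟨hiU, hiA⟩ := mem_sdiff.mp hi
    refine le_min (le_trans (min_le_left _ _) (max_le ?_ ?_))
      (le_trans (min_le_right _ _) (hgU i hiU))
    · obtain ⟨j, hj⟩ := hAUne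
      obtain ⟨hjA, hjT⟩ := mem_sdiff.mp hj
      have hjU : j ∈ U := by
        rcases mem_union.mp (hAsub hjA) with h | h
        · exact absurd h hjT
        · exact h
      calc ΩU ≤ U.inf' hU (fun j => s i j) := hΩU ▸ inf'_le _ hiU
        _ ≤ s i j := inf'_le _ hjU
        _ ≤ A.sup' hA (fun j => s i j) := le_sup' _ hjA
    · obtain ⟨j, hj⟩ := hATne
      obtain ⟨hjA, hjT⟩ := mem_inter.mp hj
      calc ΩUT ≤ T.inf' hT (fun j => s i j) := hΩUT ▸ inf'_le _ hiU
        _ ≤ s i j := inf'_le _ hjT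
        _ ≤ A.sup' hA (fun j => s i j) := le_sup' _ hjA
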